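/- Let 0 < μ_a < μ_1 < 1. The function g_a(x) = kl(μ_1, m_a(x)) + x·kl(μ_a, m_a(x)), with m_a(x) = (μ_1 + x·μ_a)/(1+x), is differentiable on (0,∞) and its derivative is g_a'(x) = kl(μ_a, m_a(x)) > 0 for every x > 0. -/

import Mathlib

/-- Bernoulli Kullback–Leibler divergence. -/
noncomputable def kl (x y : ℝ) : ℝ :=
  x * Real.log (x / y) + (1 - x) * Real.log ((1 - x) / (1 - y))

/-- The weighted mean `m_a(x) = (μ₁ + x μₐ)/(1+x)`. -/
noncomputable def marm (μ1 μa x : ℝ) : ℝ := (μ1 + x * μa) / (1 + x)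

/-- The function `g_a(x) = kl(μ₁, m_a(x)) + x·kl(μₐ, m_a(x))`. -/
noncomputable def garm (μ1 μa x : ℝ) : ℝ :=
  kl μ1 (marm μ1 μa x) + x * kl μa (marm μ1 μa x)

lemma kl_pos (p q : ℝ) (hp0 : 0 < p) (hp1 : p < 1) (hq0 : 0 < q) (hq1 : q < 1)
    (hne : p ≠ q) : 0 < kl p q := by
  have hqp : q / p ≠ 1 := by
    intro h
    exact hne ((div_eq_one_iff_eq hp0.ne').mp h).symm
  have hqp' : (1 - q) / (1 - p) ≠ 1 := by
    intro h
    have := (div_eq_one_iff_eq (by linarith : (1:ℝ) - p ≠ 0)).mp h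
    exact hne (by linarith)
  have h1 : Real.log (q / p) < q / p - 1 :=
    Real.log_lt_sub_one_of_pos (by positivity) hqp
  have h2 : Real.log ((1 - q) / (1 - p)) < (1 - q) / (1 - p) - 1 :=
    Real.log_lt_sub_one_of_pos (by apply div_pos <;> linarith) hqp'
  have e1 : Real.log (p / q) = -(Real.log (q / p)) := by
    rw [Real.log_div hp0.ne' hq0.ne', Real.log_div hq0.ne' hp0.ne']; ring
  have e2 : Real.log ((1 - p) / (1 - q)) = -(Real.log ((1 - q) / (1 - p))) := by
    rw [Real.log_div (by linarith) (by linarith), Real.log_div (by linarith) (by linarith)]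
    ring
  have c1 : p * (q / p) = q := by field_simp
  have c2 : (1 - p) * ((1 - q) / (1 - p)) = 1 - q := by
    rw [mul_comm, div_mul_cancel₀ _ (by linarith : (1:ℝ) - p ≠ 0)]
  unfold kl
  rw [e1, e2]
  nlinarith [mul_lt_mul_of_pos_left h1 hp0,
    mul_lt_mul_of_pos_left h2 (by linarith : (0:ℝ) < 1 - p)]

lemma marm_mem (μ1 μa : ℝ) (h0 : 0 < μa) (hlt : μa < μ1) (h1 : μ1 < 1)
    {y : ℝ} (hy : 0 < y) : 0 < marm μ1 μa y ∧ marm μ1 μa y < 1 ∧ μa < marm μ1 μa y := by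
  have hd : (0:ℝ) < 1 + y := by linarith
  refine ⟨?_, ?_, ?_⟩
  · rw [marm]; apply div_pos (by nlinarith) hd
  · rw [marm, div_lt_one hd]; nlinarith
  · rw [marm, lt_div_iff₀ hd]; nlinarith

lemma kl_marm_eq (μ1 μa p : ℝ) (hp0 : 0 < p) (hp1 : p < 1)
    {y : ℝ} (hM0 : 0 < marm μ1 μa y) (hM1 : marm μ1 μa y < 1) :
    kl p (marm μ1 μa y) = p * Real.log p + (1 - p) * Real.log (1 - p)
      - p * Real.log (marm μ1 μa y) - (1 - p) * Real.log (1 - marm μ1 μa y) := by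
  rw [kl, Real.log_div hp0.ne' hM0.ne', Real.log_div (by linarith) (by linarith)]
  ring

/-- `g_a` is differentiable on `(0,∞)`, with derivative
`g_a'(x) = kl(μₐ, m_a(x)) > 0`. -/
theorem garm_deriv (μ1 μa : ℝ) (h0 : 0 < μa) (hlt : μa < μ1) (h1 : μ1 < 1)
    (x : ℝ) (hx : 0 < x) :
    HasDerivAt (garm μ1 μa) (kl μa (marm μ1 μa x)) x ∧ 0 < kl μa (marm μ1 μa x) := by
  obtain ⟨hM0, hM1, hMa⟩ := marm_mem μ1 μa h0 hlt h1 hx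
  have h1a : μa < 1 := by linarith
  have h01 : 0 < μ1 := by linarith
  refine ⟨?_, kl_pos μa (marm μ1 μa x) h0 h1a hM0 hM1 hMa.ne⟩
  set M := marm μ1 μa x with hMdef
  have hden : (0:ℝ) < 1 + x := by linarith
  have hdne : (1:ℝ) + x ≠ 0 := hden.ne'
  have hMne : M ≠ 0 := hM0.ne'
  have h1Mne : (1:ℝ) - M ≠ 0 := by intro h; nlinarith
  have key : M * (1 + x) = μ1 + x * μa := by
    rw [hMdef, marm]; field_simp
  -- derivative of marm
  have hm : HasDerivAt (marm μ1 μa)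
      ((μa * (1 + x) - (μ1 + x * μa) * 1) / (1 + x) ^ 2) x := by
    have hnum : HasDerivAt (fun y : ℝ => μ1 + y * μa) μa x := by
      have := ((hasDerivAt_id x).mul_const μa).const_add μ1
      simpa using this
    have hden' : HasDerivAt (fun y : ℝ => 1 + y) 1 x := by
      have := (hasDerivAt_id x).const_add (1:ℝ)
      simpa using this
    exact hnum.div hden' hdne
  set m' := (μa * (1 + x) - (μ1 + x * μa) * 1) / (1 + x) ^ 2 with hm'def
  have hlogm : HasDerivAt (fun y => Real.log (marm μ1 μa y)) (m' / M) x := hm.log hMne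
  have hlog1m : HasDerivAt (fun y => Real.log (1 - marm μ1 μa y)) ((0 - m') / (1 - M)) x :=
    ((hasDerivAt_const x (1:ℝ)).sub hm).log (sub_ne_zero.mpr hM1.ne')
  set C1 := μ1 * Real.log μ1 + (1 - μ1) * Real.log (1 - μ1) with hC1
  set C2 := μa * Real.log μa + (1 - μa) * Real.log (1 - μa) with hC2
  set G : ℝ → ℝ := fun y =>
    (C1 - μ1 * Real.log (marm μ1 μa y) - (1 - μ1) * Real.log (1 - marm μ1 μa y))
      + y * (C2 - μa * Real.log (marm μ1 μa y) - (1 - μa) * Real.log (1 - marm μ1 μa y))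
    with hGdef
  have hF1 : HasDerivAt (fun y =>
      C1 - μ1 * Real.log (marm μ1 μa y) - (1 - μ1) * Real.log (1 - marm μ1 μa y))
      (0 - μ1 * (m' / M) - (1 - μ1) * ((0 - m') / (1 - M))) x :=
    ((hasDerivAt_const x C1).sub (hlogm.const_mul μ1)).sub (hlog1m.const_mul (1 - μ1))
  have hF2 : HasDerivAt (fun y =>
      C2 - μa * Real.log (marm μ1 μa y) - (1 - μa) * Real.log (1 - marm μ1 μa y))
      (0 - μa * (m' / M) - (1 - μa) * ((0 - m') / (1 - M))) x :=
    ((hasDerivAt_const x C2).sub (hlogm.const_mul μa)).sub (hlog1m.const_mul (1 - μa))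
  have hG : HasDerivAt G
      ((0 - μ1 * (m' / M) - (1 - μ1) * ((0 - m') / (1 - M)))
        + (1 * (C2 - μa * Real.log M - (1 - μa) * Real.log (1 - M))
          + x * (0 - μa * (m' / M) - (1 - μa) * ((0 - m') / (1 - M))))) x :=
    hF1.add ((hasDerivAt_id x).mul hF2)
  have hEq : garm μ1 μa =ᶠ[nhds x] G := by
    filter_upwards [Ioi_mem_nhds hx] with y hy
    obtain ⟨hy0, hy1, _⟩ := marm_mem μ1 μa h0 hlt h1 hy
    rw [garm, hGdef, kl_marm_eq μ1 μa μ1 h01 h1 hy0 hy1,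
      kl_marm_eq μ1 μa μa h0 h1a hy0 hy1]
  have hG' := hG.congr_of_eventuallyEq hEq
  -- identify the derivative
  have e1 : 0 - μ1 * (m' / M) - (1 - μ1) * ((0 - m') / (1 - M))
      = m' * ((M - μ1) / (M * (1 - M))) := by
    field_simp; ring
  have e2 : 0 - μa * (m' / M) - (1 - μa) * ((0 - m') / (1 - M))
      = m' * ((M - μa) / (M * (1 - M))) := by
    field_simp; ring
  have hsum : (M - μ1) + x * (M - μa) = 0 := by linear_combination key
  have hz : (0 - μ1 * (m' / M) - (1 - μ1) * ((0 - m') / (1 - M)))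
      + x * (0 - μa * (m' / M) - (1 - μa) * ((0 - m') / (1 - M))) = 0 := by
    rw [e1, e2]
    have : m' * ((M - μ1) / (M * (1 - M))) + x * (m' * ((M - μa) / (M * (1 - M))))
        = (m' / (M * (1 - M))) * ((M - μ1) + x * (M - μa)) := by ring
    rw [this, hsum, mul_zero]
  have hK : kl μa M = C2 - μa * Real.log M - (1 - μa) * Real.log (1 - M) := by
    rw [kl_marm_eq μ1 μa μa h0 h1a hM0 hM1]
  refine hG'.congr_deriv ?_
  linarith [hz, hK]
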